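/- Let 𝔻 be the set of even continuous functions f : ℝ → ℝ with f(0)=1, (1-x²)₊ ≤ f ≤ 1, f non-increasing on [0,∞), s ↦ f(√s) convex, and f'₋(1/2) ≤ -η for a fixed η ∈ (0,1). Then 𝔻 is sequentially compact with respect to the norm ‖f‖ = sup_x (1+|x|)^{-1/2}|f(x)|. -/

import Mathlib

open Filter
open Set Topology

def memD (η : ℝ) (f : ℝ → ℝ) : Prop :=
  Continuous f ∧ (∀ x, f (-x) = f x) ∧ f 0 = 1 ∧
    (∀ x, max (1 - x ^ 2) 0 ≤ f x ∧ f x ≤ 1) ∧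
    AntitoneOn f (Set.Ici 0) ∧
    ConvexOn ℝ (Set.Ici 0) (fun s => f (Real.sqrt s)) ∧
    (∃ d : ℝ, HasDerivWithinAt f d (Set.Iio ((1 : ℝ) / 2)) ((1 : ℝ) / 2) ∧ d ≤ -η)

-- f x = f(√(x²))
lemma memD.eq_sqrt_sq {η : ℝ} {f : ℝ → ℝ} (h : memD η f) (x : ℝ) :
    f (Real.sqrt (x ^ 2)) = f x := by
  rw [Real.sqrt_sq_eq_abs]
  rcases abs_choice x with h1 | h1
  · rw [h1]
  · rw [h1, h.2.1]

-- 1-Lipschitz bound for G on [0,∞): for 0 ≤ s ≤ t, 0 ≤ G s - G t ≤ t - s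
lemma memD.G_lip {η : ℝ} {f : ℝ → ℝ} (h : memD η f) {s t : ℝ} (hs : 0 ≤ s) (hst : s ≤ t) :
    f (Real.sqrt t) ≤ f (Real.sqrt s) ∧ f (Real.sqrt s) - f (Real.sqrt t) ≤ t - s := by
  obtain ⟨-, -, h0, hb, hA, hC, -⟩ := h
  have ht : (0:ℝ) ≤ t := hs.trans hst
  constructor
  · exact hA (Real.sqrt_nonneg s) (Real.sqrt_nonneg t) (Real.sqrt_le_sqrt hst)
  rcases eq_or_lt_of_le hst with rfl | hst'
  · simp
  rcases eq_or_lt_of_le hs with rfl | hs'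
  · -- s = 0
    have h1 : max (1 - Real.sqrt t ^ 2) 0 ≤ f (Real.sqrt t) := (hb _).1
    have h2 : Real.sqrt t ^ 2 = t := Real.sq_sqrt ht
    have : 1 - t ≤ f (Real.sqrt t) := by
      calc 1 - t = 1 - Real.sqrt t ^ 2 := by rw [h2]
        _ ≤ max (1 - Real.sqrt t ^ 2) 0 := le_max_left _ _
        _ ≤ f (Real.sqrt t) := h1
    rw [Real.sqrt_zero, h0]
    linarith
  · -- 0 < s < t
    have hsec := hC.secant_mono (a := s) (x := (0:ℝ)) (y := t)
      (mem_Ici.2 hs) (mem_Ici.2 le_rfl) (mem_Ici.2 ht) (ne_of_lt hs') (ne_of_gt hst') ht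
    rw [Real.sqrt_zero, h0] at hsec
    -- hsec : (1 - f √s)/(0 - s) ≤ (f √t - f √s)/(t - s)
    have hls : -1 ≤ (1 - f (Real.sqrt s)) / (0 - s) := by
      have h1 : 1 - s ≤ f (Real.sqrt s) := by
        have := (hb (Real.sqrt s)).1
        have h2 : Real.sqrt s ^ 2 = s := Real.sq_sqrt hs
        calc 1 - s = 1 - Real.sqrt s ^ 2 := by rw [h2]
          _ ≤ max (1 - Real.sqrt s ^ 2) 0 := le_max_left _ _
          _ ≤ _ := this
      rw [le_div_iff_of_neg (by linarith : (0:ℝ) - s < 0)]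
      linarith
    have := hls.trans hsec
    rw [le_div_iff₀ (by linarith : (0:ℝ) < t - s)] at this
    linarith

lemma memD.lip {η : ℝ} {f : ℝ → ℝ} (h : memD η f) (x y : ℝ) :
    |f x - f y| ≤ |x ^ 2 - y ^ 2| := by
  rcases le_total (x ^ 2) (y ^ 2) with hxy | hxy
  · have := h.G_lip (sq_nonneg x) hxy
    rw [h.eq_sqrt_sq, h.eq_sqrt_sq] at this
    rw [abs_of_nonneg (by linarith [this.1]), abs_sub_comm, abs_of_nonneg (by linarith)]
    linarith [this.2]
  · have := h.G_lip (sq_nonneg y) hxy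
    rw [h.eq_sqrt_sq, h.eq_sqrt_sq] at this
    rw [abs_sub_comm, abs_of_nonneg (by linarith [this.1]), abs_of_nonneg (by linarith)]
    linarith [this.2]

lemma sqrt_quarter : Real.sqrt (1/4) = 1/2 := by
  rw [show (1/4:ℝ) = (1/2)^2 by norm_num, Real.sqrt_sq (by norm_num)]

lemma memD.key {η : ℝ} {f : ℝ → ℝ} (h : memD η f) {x : ℝ} (hx0 : 0 ≤ x)
    (hx : x < 1/2) : η * (1/4 - x ^ 2) ≤ f x - f (1/2) := by
  obtain ⟨d, hd, hdη⟩ := h.2.2.2.2.2.2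
  have hC := h.2.2.2.2.2.1
  have hslope : Tendsto (slope f (1/2)) (𝓝[<] (1/2:ℝ)) (𝓝 d) :=
    (hasDerivWithinAt_iff_tendsto_slope' (by simp)).mp hd
  set c : ℝ := (f x - f (1/2)) / (x ^ 2 - 1/4) with hc
  have hev : ∀ᶠ y in 𝓝[<] (1/2:ℝ), c * (y + 1/2) ≤ slope f (1/2) y := by
    filter_upwards [Ioo_mem_nhdsLT_of_mem (show (1/2:ℝ) ∈ Set.Ioc x (1/2) from ⟨hx, le_rfl⟩)]
      with y hy
    have hy1 : x < y := hy.1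
    have hy2 : y < 1/2 := hy.2
    have hy0 : 0 < y := lt_of_le_of_lt hx0 hy1
    have hsec := hC.secant_mono (a := (1/4:ℝ)) (x := x^2) (y := y^2)
      (by norm_num) (Set.mem_Ici.2 (sq_nonneg x)) (Set.mem_Ici.2 (sq_nonneg y))
      (by nlinarith) (by nlinarith) (by nlinarith)
    rw [h.eq_sqrt_sq, h.eq_sqrt_sq, sqrt_quarter] at hsec
    have hne1 : y - 1/2 ≠ 0 := by linarith
    have hne2 : y + 1/2 ≠ 0 := by linarith
    have hne3 : y^2 - 1/4 ≠ 0 := ne_of_lt (by nlinarith)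
    have heq : (f y - f (1/2)) / (y^2 - 1/4) * (y + 1/2) = slope f (1/2) y := by
      rw [slope_def_field]
      rw [div_mul_eq_mul_div, div_eq_div_iff hne3 hne1]
      ring
    calc c * (y + 1/2) ≤ (f y - f (1/2)) / (y^2 - 1/4) * (y + 1/2) :=
          mul_le_mul_of_nonneg_right hsec (by linarith)
      _ = slope f (1/2) y := heq
  have hlim : Tendsto (fun y : ℝ => c * (y + 1/2)) (𝓝[<] (1/2:ℝ)) (𝓝 (c * 1)) := by
    have h1 : Tendsto (fun y : ℝ => c * (y + 1/2)) (𝓝 (1/2:ℝ)) (𝓝 (c * (1/2 + 1/2))) :=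
      ((continuous_const.mul (continuous_id.add continuous_const)).tendsto _)
    rw [show (1/2 + 1/2 : ℝ) = 1 by norm_num] at h1
    exact h1.mono_left nhdsWithin_le_nhds
  have hcd : c * 1 ≤ d := le_of_tendsto_of_tendsto hlim hslope hev
  rw [mul_one] at hcd
  have hcη : c ≤ -η := hcd.trans hdη
  rw [hc, div_le_iff_of_neg (by nlinarith : x ^ 2 - 1/4 < 0)] at hcη
  nlinarith

lemma deriv_of_key {η : ℝ} (hη : 0 < η) {g : ℝ → ℝ}
    (hC : ConvexOn ℝ (Set.Ici 0) (fun s => g (Real.sqrt s)))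
    (hK : ∀ x : ℝ, 0 ≤ x → x < 1/2 → η * (1/4 - x ^ 2) ≤ g x - g (1/2)) :
    ∃ d : ℝ, HasDerivWithinAt g d (Set.Iio ((1:ℝ)/2)) ((1:ℝ)/2) ∧ d ≤ -η := by
  set G : ℝ → ℝ := fun s => g (Real.sqrt s) with hG
  set F : ℝ → ℝ := slope G (1/4) with hF
  have hFs : ∀ s : ℝ, F s = (G s - G (1/4)) / (s - 1/4) := fun s => slope_def_field G _ _
  have hG14 : G (1/4) = g (1/2) := by rw [hG]; simp only; rw [sqrt_quarter]
  have hmono : MonotoneOn F (Set.Ioo 0 (1/4)) := by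
    intro s hs t ht hst
    rw [hFs, hFs]
    exact hC.secant_mono (a := (1/4:ℝ)) (by norm_num) (Set.mem_Ici.2 hs.1.le)
      (Set.mem_Ici.2 ht.1.le) (ne_of_lt hs.2) (ne_of_lt ht.2) hst
  have hFle : ∀ s ∈ Set.Ioo (0:ℝ) (1/4), F s ≤ -η := by
    intro s hs
    have hx0 : 0 ≤ Real.sqrt s := Real.sqrt_nonneg s
    have hx : Real.sqrt s < 1/2 := by
      rw [← sqrt_quarter]
      exact Real.sqrt_lt_sqrt hs.1.le hs.2
    have hxs : Real.sqrt s ^ 2 = s := Real.sq_sqrt hs.1.le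
    have hKs := hK (Real.sqrt s) hx0 hx
    rw [hxs] at hKs
    rw [hFs, hG14, div_le_iff_of_neg (by linarith [hs.2] : s - 1/4 < 0)]
    have : G s = g (Real.sqrt s) := rfl
    rw [this]
    linarith
  have hne : (Set.Ioo (0:ℝ) (1/4)).Nonempty := ⟨1/8, by norm_num⟩
  have hbdd : BddAbove (F '' Set.Ioo 0 (1/4)) := by
    refine ⟨-η, ?_⟩
    rintro - ⟨s, hs, rfl⟩
    exact hFle s hs
  set d : ℝ := sSup (F '' Set.Ioo 0 (1/4)) with hd
  have htend : Tendsto F (𝓝[<] (1/4:ℝ)) (𝓝 d) :=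
    MonotoneOn.tendsto_nhdsWithin_Ioo_left hne hmono hbdd
  have hdle : d ≤ -η := csSup_le (hne.image F) (by rintro - ⟨s, hs, rfl⟩; exact hFle s hs)
  have hmap : Tendsto (fun x : ℝ => x ^ 2) (𝓝[Set.Ioo 0 (1/2)] (1/2:ℝ)) (𝓝[<] (1/4:ℝ)) := by
    rw [tendsto_nhdsWithin_iff]
    constructor
    · have := ((continuous_pow 2).tendsto (1/2:ℝ)).mono_left
        (nhdsWithin_le_nhds (s := Set.Ioo (0:ℝ) (1/2)))
      norm_num at this ⊢
      exact this
    · exact eventually_mem_nhdsWithin.mono fun y hy => Set.mem_Iio.2 (by nlinarith [hy.1, hy.2])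
  have hmul : Tendsto (fun x : ℝ => (x + 1/2) * F (x ^ 2)) (𝓝[Set.Ioo 0 (1/2)] (1/2:ℝ))
      (𝓝 (1 * d)) := by
    refine Tendsto.mul ?_ (htend.comp hmap)
    have : Tendsto (fun x : ℝ => x + 1/2) (𝓝 (1/2:ℝ)) (𝓝 (1/2 + 1/2)) :=
      (continuous_id.add continuous_const).tendsto _
    rw [show (1/2 + 1/2 : ℝ) = 1 by norm_num] at this
    exact this.mono_left nhdsWithin_le_nhds
  rw [one_mul] at hmul
  have heq : ∀ᶠ x in 𝓝[Set.Ioo 0 (1/2)] (1/2:ℝ),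
      (x + 1/2) * F (x ^ 2) = slope g (1/2) x := by
    refine eventually_mem_nhdsWithin.mono fun x hx => ?_
    have hx0 : 0 < x := hx.1
    have hx2 : x < 1/2 := hx.2
    have hGx : G (x ^ 2) = g x := by rw [hG]; simp only; rw [Real.sqrt_sq hx0.le]
    have hne1 : x - 1/2 ≠ 0 := by linarith
    have hne3 : x ^ 2 - 1/4 ≠ 0 := ne_of_lt (by nlinarith)
    rw [hFs, hGx, hG14, slope_def_field, mul_comm, div_mul_eq_mul_div,
      div_eq_div_iff hne3 hne1]
    ring
  have hslope : Tendsto (slope g (1/2)) (𝓝[Set.Ioo 0 (1/2)] (1/2:ℝ)) (𝓝 d) :=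
    hmul.congr' heq
  have hfil : 𝓝[Set.Iio (1/2:ℝ)] (1/2:ℝ) = 𝓝[Set.Ioo (0:ℝ) (1/2)] (1/2:ℝ) := by
    rw [nhdsWithin_restrict' (Set.Iio (1/2:ℝ)) (Ioi_mem_nhds (by norm_num : (0:ℝ) < 1/2)),
      Set.Iio_inter_Ioi]
  refine ⟨d, (hasDerivWithinAt_iff_tendsto_slope' (by simp)).mpr ?_, hdle⟩
  rw [hfil]
  exact hslope

lemma memD.nonneg {η : ℝ} {f : ℝ → ℝ} (h : memD η f) (x : ℝ) : 0 ≤ f x :=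
  le_trans (le_max_right _ _) ((h.2.2.2.1 x).1)

lemma memD.limit {η : ℝ} (hη : 0 < η) {F : ℕ → ℝ → ℝ} {g : ℝ → ℝ}
    (hF : ∀ n, memD η (F n)) (hg : ∀ x, Tendsto (fun n => F n x) atTop (𝓝 (g x))) :
    memD η g := by
  have hlip : ∀ x y, |g x - g y| ≤ |x ^ 2 - y ^ 2| := by
    intro x y
    have h1 : Tendsto (fun n => |F n x - F n y|) atTop (𝓝 |g x - g y|) :=
      ((hg x).sub (hg y)).abs
    exact le_of_tendsto h1 (Eventually.of_forall fun n => (hF n).lip x y)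
  have hcont : Continuous g := by
    rw [continuous_iff_continuousAt]
    intro x
    have h1 : Tendsto (fun y : ℝ => |y ^ 2 - x ^ 2|) (𝓝 x) (𝓝 0) := by
      have : Continuous (fun y : ℝ => |y ^ 2 - x ^ 2|) :=
        ((continuous_pow 2).sub continuous_const).abs
      simpa using this.tendsto x
    have h2 : Tendsto (fun y => |g y - g x|) (𝓝 x) (𝓝 0) :=
      squeeze_zero (fun y => abs_nonneg _) (fun y => hlip y x) h1
    rw [ContinuousAt, tendsto_iff_dist_tendsto_zero]
    simpa [Real.dist_eq] using h2
  have heven : ∀ x, g (-x) = g x := by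
    intro x
    refine tendsto_nhds_unique (hg (-x)) ?_
    exact (hg x).congr fun n => ((hF n).2.1 x).symm
  have h0 : g 0 = 1 := by
    have h1 : Tendsto (fun _ : ℕ => (1:ℝ)) atTop (𝓝 (g 0)) :=
      (hg 0).congr fun n => (hF n).2.2.1
    exact tendsto_nhds_unique h1 tendsto_const_nhds
  have hb : ∀ x, max (1 - x ^ 2) 0 ≤ g x ∧ g x ≤ 1 := by
    intro x
    constructor
    · exact ge_of_tendsto (hg x) (Eventually.of_forall fun n => ((hF n).2.2.2.1 x).1)
    · exact le_of_tendsto (hg x) (Eventually.of_forall fun n => ((hF n).2.2.2.1 x).2)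
  have hA : AntitoneOn g (Set.Ici 0) := by
    intro x hx y hy hxy
    exact le_of_tendsto_of_tendsto' (hg y) (hg x)
      (fun n => (hF n).2.2.2.2.1 hx hy hxy)
  have hC : ConvexOn ℝ (Set.Ici 0) (fun s => g (Real.sqrt s)) := by
    refine ⟨convex_Ici 0, ?_⟩
    intro s hs t ht a b ha hb' hab
    simp only [smul_eq_mul]
    refine le_of_tendsto_of_tendsto' (hg _) (((hg _).const_mul a).add ((hg _).const_mul b))
      (fun n => ?_)
    have := (hF n).2.2.2.2.2.1.2 hs ht ha hb' hab
    simpa [smul_eq_mul] using this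
  have hK : ∀ x : ℝ, 0 ≤ x → x < 1/2 → η * (1/4 - x ^ 2) ≤ g x - g (1/2) := by
    intro x hx0 hx
    exact ge_of_tendsto ((hg x).sub (hg (1/2)))
      (Eventually.of_forall fun n => (hF n).key hx0 hx)
  exact ⟨hcont, heven, h0, hb, hA, hC, deriv_of_key hη hC hK⟩

theorem D_seq_compact (η : ℝ) (hη : 0 < η) (hη1 : η < 1)
    (f : ℕ → ℝ → ℝ) (hf : ∀ n, memD η (f n)) :
    ∃ φ : ℕ → ℕ, StrictMono φ ∧ ∃ g : ℝ → ℝ, memD η g ∧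
      ∀ ε : ℝ, 0 < ε → ∃ N : ℕ, ∀ n ≥ N, ∀ x : ℝ,
        (1 + |x|) ^ (-(1 / 2) : ℝ) * |f (φ n) x - g x| ≤ ε := by
  have h01 : ∀ n x, f n x ∈ Set.Icc (0:ℝ) 1 :=
    fun n x => ⟨(hf n).nonneg x, ((hf n).2.2.2.1 x).2⟩
  set Fq : ℕ → (ℚ → Set.Icc (0:ℝ) 1) := fun n q => ⟨f n (q:ℝ), h01 n q⟩ with hFq
  obtain ⟨a, φ, hφ, ha⟩ := CompactSpace.tendsto_subseq Fq
  have haq : ∀ q : ℚ, Tendsto (fun n => f (φ n) (q:ℝ)) atTop (𝓝 ((a q : ℝ))) := by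
    intro q
    have h1 : Tendsto (fun n => (Fq ∘ φ) n q) atTop (𝓝 (a q)) := tendsto_pi_nhds.1 ha q
    exact (continuous_subtype_val.tendsto _).comp h1
  have hcau : ∀ x : ℝ, ∃ l : ℝ, Tendsto (fun n => f (φ n) x) atTop (𝓝 l) := by
    intro x
    apply cauchySeq_tendsto_of_complete
    rw [Metric.cauchySeq_iff]
    intro ε hε
    set δ : ℝ := min 1 (ε / (3 * (2 * |x| + 2))) with hδ
    have hb2 : (0:ℝ) < 2 * |x| + 2 := by positivity
    have hδ0 : 0 < δ := lt_min one_pos (div_pos hε (by positivity))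
    have hδ1 : δ ≤ 1 := min_le_left _ _
    obtain ⟨q, hq⟩ := exists_rat_near x hδ0
    have hq2 : |x ^ 2 - (q:ℝ) ^ 2| ≤ ε / 3 := by
      have h2 : |(q:ℝ)| ≤ |x| + δ := by
        have h3 := abs_sub_abs_le_abs_sub (q:ℝ) x
        rw [abs_sub_comm] at h3
        linarith [hq.le]
      have h4 : |x + (q:ℝ)| ≤ 2 * |x| + 2 := by
        have := abs_add_le x (q:ℝ)
        linarith [abs_nonneg x]
      have h5 : |x ^ 2 - (q:ℝ) ^ 2| = |x - q| * |x + q| := by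
        rw [← abs_mul]; ring_nf
      rw [h5]
      have h6 : |x - (q:ℝ)| * |x + q| ≤ (ε / (3 * (2 * |x| + 2))) * (2 * |x| + 2) := by
        apply mul_le_mul (hq.le.trans (min_le_right _ _)) h4 (abs_nonneg _)
        positivity
      calc |x - (q:ℝ)| * |x + q| ≤ (ε / (3 * (2 * |x| + 2))) * (2 * |x| + 2) := h6
        _ = ε / 3 := by field_simp
    obtain ⟨N, hN⟩ := Metric.cauchySeq_iff.1 (haq q).cauchySeq (ε/3) (by positivity)
    refine ⟨N, fun m hm n hn => ?_⟩
    have l1 : |f (φ m) x - f (φ m) (q:ℝ)| ≤ ε / 3 :=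
      ((hf (φ m)).lip x q).trans hq2
    have l2 : |f (φ n) x - f (φ n) (q:ℝ)| ≤ ε / 3 :=
      ((hf (φ n)).lip x q).trans hq2
    have l3 := hN m hm n hn
    rw [Real.dist_eq] at l3 ⊢
    have t1 := abs_sub_le (f (φ m) x) (f (φ m) (q:ℝ)) (f (φ n) x)
    have t2 := abs_sub_le (f (φ m) (q:ℝ)) (f (φ n) (q:ℝ)) (f (φ n) x)
    have t3 : |f (φ n) (q:ℝ) - f (φ n) x| = |f (φ n) x - f (φ n) (q:ℝ)| := abs_sub_comm _ _
    linarith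
  choose g hg using hcau
  have hgD : memD η g := memD.limit hη (fun n => hf (φ n)) hg
  refine ⟨φ, hφ, g, hgD, ?_⟩
  intro ε hε
  set R : ℝ := max 1 (ε⁻¹ ^ 2) with hR
  have hR1 : (1:ℝ) ≤ R := le_max_left _ _
  have hR0 : (0:ℝ) < R := lt_of_lt_of_le one_pos hR1
  set δ : ℝ := min 1 (ε / (3 * (2 * R + 1))) with hδ
  have hδ0 : 0 < δ := lt_min one_pos (div_pos hε (by positivity))
  have hδ1 : δ ≤ 1 := min_le_left _ _
  have hδ2 : δ * (2 * R + 1) ≤ ε / 3 := by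
    calc δ * (2 * R + 1) ≤ (ε / (3 * (2 * R + 1))) * (2 * R + 1) :=
          mul_le_mul_of_nonneg_right (min_le_right _ _) (by positivity)
      _ = ε / 3 := by field_simp
  set s : Finset ℤ := Finset.Icc (-⌈R / δ⌉) ⌈R / δ⌉ with hs
  have hev : ∀ᶠ n in atTop, ∀ j ∈ s, |f (φ n) (j * δ) - g (j * δ)| < ε / 3 := by
    rw [eventually_all_finset]
    intro j hj
    have h2 := Metric.tendsto_atTop.mp (hg ((j:ℝ) * δ)) (ε/3) (by positivity)
    obtain ⟨N, hN⟩ := h2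
    exact eventually_atTop.2 ⟨N, fun n hn => by simpa [Real.dist_eq] using hN n hn⟩
  obtain ⟨N, hN⟩ := eventually_atTop.1 hev
  refine ⟨N, fun n hn x => ?_⟩
  have hw0 : (0:ℝ) ≤ (1 + |x|) ^ (-(1 / 2) : ℝ) :=
    Real.rpow_nonneg (by positivity) _
  have hdiff1 : |f (φ n) x - g x| ≤ 1 := by
    have h1 := h01 (φ n) x
    have h2 : 0 ≤ g x := hgD.nonneg x
    have h3 : g x ≤ 1 := (hgD.2.2.2.1 x).2
    rw [abs_le]
    exact ⟨by linarith [h1.1], by linarith [h1.2]⟩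
  by_cases hxR : |x| ≤ R
  · -- near case: use the net point
    set j : ℤ := round (x / δ) with hj
    have hround : |x / δ - (j:ℝ)| ≤ 1/2 := by
      rw [hj]
      exact abs_sub_round (x / δ)
    have hjabs : |(j:ℝ)| ≤ R / δ + 1/2 := by
      have h1 : |(j:ℝ)| ≤ |x / δ| + 1/2 := by
        have := abs_sub_abs_le_abs_sub (j:ℝ) (x / δ)
        rw [abs_sub_comm] at hround
        linarith
      have h2 : |x / δ| ≤ R / δ := by
        rw [abs_div, abs_of_pos hδ0]
        gcongr
      linarith
    have hjmem : j ∈ s := by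
      rw [hs, Finset.mem_Icc]
      have hceil : R / δ ≤ (⌈R / δ⌉ : ℝ) := Int.le_ceil _
      have h1 : |(j:ℝ)| < (⌈R / δ⌉ : ℝ) + 1 := by linarith
      have h2 : (|j| : ℝ) < ((⌈R / δ⌉ + 1 : ℤ) : ℝ) := by push_cast; exact h1
      have h3 : |j| < ⌈R / δ⌉ + 1 := by exact_mod_cast h2
      have h4 : |j| ≤ ⌈R / δ⌉ := by omega
      rw [abs_le] at h4
      exact h4
    set p : ℝ := (j:ℝ) * δ with hp
    have hxp : |x - p| ≤ δ := by
      have h1 : x - p = (x / δ - j) * δ := by rw [hp]; field_simp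
      rw [h1, abs_mul, abs_of_pos hδ0]
      nlinarith [hround, hδ0]
    have hpabs : |p| ≤ R + 1 := by
      have h1 := abs_sub_abs_le_abs_sub p x
      rw [abs_sub_comm] at h1
      linarith
    have hsum : |x + p| ≤ 2 * R + 1 := by
      have := abs_add_le x p
      linarith
    have hfx : |f (φ n) x - f (φ n) p| ≤ ε / 3 := by
      refine ((hf (φ n)).lip x p).trans ?_
      have h1 : |x ^ 2 - p ^ 2| = |x - p| * |x + p| := by rw [← abs_mul]; ring_nf
      rw [h1]
      calc |x - p| * |x + p| ≤ δ * (2 * R + 1) :=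
            mul_le_mul hxp hsum (abs_nonneg _) hδ0.le
        _ ≤ ε / 3 := hδ2
    have hgx : |g p - g x| ≤ ε / 3 := by
      refine (hgD.lip p x).trans ?_
      have h1 : |p ^ 2 - x ^ 2| = |x - p| * |x + p| := by
        rw [← abs_mul, abs_sub_comm]; ring_nf
      rw [h1]
      calc |x - p| * |x + p| ≤ δ * (2 * R + 1) :=
            mul_le_mul hxp hsum (abs_nonneg _) hδ0.le
        _ ≤ ε / 3 := hδ2
    have hmid : |f (φ n) p - g p| < ε / 3 := hN n hn j hjmem
    have htot : |f (φ n) x - g x| ≤ ε := by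
      have t1 := abs_sub_le (f (φ n) x) (f (φ n) p) (g x)
      have t2 := abs_sub_le (f (φ n) p) (g p) (g x)
      linarith
    calc (1 + |x|) ^ (-(1 / 2) : ℝ) * |f (φ n) x - g x|
        ≤ 1 * ε := mul_le_mul
          (Real.rpow_le_one_of_one_le_of_nonpos (by linarith [abs_nonneg x]) (by norm_num))
          htot (abs_nonneg _) one_pos.le
      _ = ε := one_mul ε
  · push_neg at hxR
    have h1x : (0:ℝ) < 1 + |x| := by positivity
    have hmono : (1 + |x|) ^ (-(1 / 2) : ℝ) ≤ (1 + R) ^ (-(1 / 2) : ℝ) :=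
      Real.rpow_le_rpow_of_nonpos (by positivity) (by linarith) (by norm_num)
    have hRe : (1 + R) ^ (-(1 / 2) : ℝ) ≤ ε := by
      rw [Real.rpow_neg (by positivity), ← Real.sqrt_eq_rpow]
      have hR2 : ε⁻¹ ^ 2 ≤ R := hR ▸ le_max_right _ _
      have hs1 : ε⁻¹ ≤ Real.sqrt (1 + R) := by
        have h2 : ε⁻¹ = Real.sqrt (ε⁻¹ ^ 2) := (Real.sqrt_sq (by positivity)).symm
        rw [h2]
        exact Real.sqrt_le_sqrt (by linarith)
      have h2 := inv_anti₀ (by positivity : (0:ℝ) < ε⁻¹) hs1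
      rwa [inv_inv] at h2
    calc (1 + |x|) ^ (-(1 / 2) : ℝ) * |f (φ n) x - g x|
        ≤ (1 + R) ^ (-(1 / 2) : ℝ) * 1 :=
          mul_le_mul hmono hdiff1 (abs_nonneg _) (Real.rpow_nonneg (by positivity) _)
      _ = (1 + R) ^ (-(1 / 2) : ℝ) := mul_one _
      _ ≤ ε := hRe
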